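/- Let k ≥ 1 and let P be the path graph on the 2k vertices x_0, x_1, …, x_{2k−1}, where x_i is adjacent to x_{i+1} for 0 ≤ i ≤ 2k−2. Apply X measurements successively at the vertices x_{2k−3}, x_{2k−5}, …, x_3, x_1 (in this order of decreasing index), where the X measurement at x_{2j−1} is taken with chosen neighbour x_{2j}. The resulting graph is the star graph with centre x_0 on the k+1 vertices {x_0, x_2, x_4, …, x_{2k−2}, x_{2k−1}}, i.e. x_0 is adjacent to each of x_2, x_4, …, x_{2k−2}, x_{2k−1} and there are no other edges. -/

import Mathlib

/-- A finite simple graph with an explicit vertex set inside an ambient type `α`. -/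
structure FGraph (α : Type*) where
  verts : Set α
  Adj : α → α → Prop
  symm : ∀ {a b}, Adj a b → Adj b a
  loopless : ∀ a, ¬ Adj a a
  edge_mem : ∀ {a b}, Adj a b → a ∈ verts ∧ b ∈ verts

namespace FGraph

variable {α : Type*}

/-- Local complementation at `v`: two distinct vertices are adjacent iff exactly one of
(adjacent in `G`) or (both neighbours of `v` in `G`) holds. -/
def LC (G : FGraph α) (v : α) : FGraph α where
  verts := G.verts
  Adj a b := a ≠ b ∧ Xor' (G.Adj a b) (G.Adj v a ∧ G.Adj v b)
  symm := by
    rintro a b ⟨hne, h⟩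
    refine ⟨hne.symm, ?_⟩
    rcases h with ⟨h1, h2⟩ | ⟨h1, h2⟩
    · exact Or.inl ⟨G.symm h1, fun hx => h2 ⟨hx.2, hx.1⟩⟩
    · exact Or.inr ⟨⟨h1.2, h1.1⟩, fun hx => h2 (G.symm hx)⟩
  loopless := fun a h => h.1 rfl
  edge_mem := by
    rintro a b ⟨hne, h⟩
    rcases h with ⟨h1, _⟩ | ⟨⟨ha, hb⟩, _⟩
    · exact G.edge_mem h1
    · exact ⟨(G.edge_mem ha).2, (G.edge_mem hb).2⟩

/-- Z measurement at `v`: delete the vertex `v` together with all incident edges. -/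
def ZM (G : FGraph α) (v : α) : FGraph α where
  verts := G.verts \ {v}
  Adj a b := G.Adj a b ∧ a ≠ v ∧ b ≠ v
  symm := fun h => ⟨G.symm h.1, h.2.2, h.2.1⟩
  loopless := fun a h => G.loopless a h.1
  edge_mem := by
    rintro a b ⟨h, ha, hb⟩
    exact ⟨⟨(G.edge_mem h).1, ha⟩, ⟨(G.edge_mem h).2, hb⟩⟩

/-- X measurement at `u` with chosen neighbour `w`:
`X_u(G) = LC_w(Z_u(LC_u(LC_w(G))))`. -/
def XM (G : FGraph α) (u w : α) : FGraph α :=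
  ((((G.LC w).LC u).ZM u).LC w)

/-- Y measurement at `v`: `Y_v(G) = Z_v(LC_v(G))`. -/
def YM (G : FGraph α) (v : α) : FGraph α :=
  (G.LC v).ZM v

/-- `G` is a star graph with centre `c`. -/
def IsStar (G : FGraph α) (c : α) : Prop :=
  c ∈ G.verts ∧
    ∀ a b, G.Adj a b ↔ (a ≠ b ∧ a ∈ G.verts ∧ b ∈ G.verts ∧ (a = c ∨ b = c))

/-- `G` is a complete graph on its vertex set. -/
def IsComplete (G : FGraph α) : Prop :=
  ∀ a b, G.Adj a b ↔ (a ≠ b ∧ a ∈ G.verts ∧ b ∈ G.verts)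

/-- One step of local complementation or vertex deletion. -/
inductive Step : FGraph α → FGraph α → Prop
  | lc (G : FGraph α) (v : α) : Step G (G.LC v)
  | del (G : FGraph α) (v : α) : Step G (G.ZM v)

/-- `H` is a vertex-minor of `G`: `H` is obtained from `G` by a finite sequence of
local complementations and vertex deletions. -/
def IsVertexMinor (H G : FGraph α) : Prop :=
  Relation.ReflTransGen Step G H

/-- One step of local complementation. -/
inductive LCStep : FGraph α → FGraph α → Prop
  | lc (G : FGraph α) (v : α) : LCStep G (G.LC v)

/-- `H` is obtained from `G` by a finite sequence of local complementations. -/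
def LCReach (G H : FGraph α) : Prop :=
  Relation.ReflTransGen LCStep G H

end FGraph

/-- The path graph on vertices `0, 1, …, n-1`, with `i` adjacent to `i+1`. -/
def pathGraph (n : ℕ) : FGraph ℕ where
  verts := {i | i < n}
  Adj a b := (a + 1 = b ∧ b < n) ∨ (b + 1 = a ∧ a < n)
  symm := fun h => h.symm
  loopless := fun a h => by
    rcases h with ⟨h, _⟩ | ⟨h, _⟩ <;> omega
  edge_mem := by
    rintro a b (⟨h, hb⟩ | ⟨h, ha⟩) <;> constructor <;> simp only [Set.mem_setOf_eq] <;> omega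

/-- The graph obtained from the path on `2k` vertices after `t` successive
X measurements: the `(t+1)`-st measurement is at the vertex `x_{2j-1}` with
chosen neighbour `x_{2j}`, where `j = k - 1 - t`. -/
def pathXMSeq (k : ℕ) : ℕ → FGraph ℕ
  | 0 => pathGraph (2 * k)
  | t + 1 => (pathXMSeq k t).XM (2 * (k - 1 - t) - 1) (2 * (k - 1 - t))

/-- applying X measurements at `x_{2k-3}, x_{2k-5}, …, x_3, x_1`
(measurement at `x_{2j-1}` taken with chosen neighbour `x_{2j}`) turns the path
on `2k` vertices into the star with centre `x₀` on the `k+1` vertices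
`{x_0, x_2, …, x_{2k-2}, x_{2k-1}}`. -/

private lemma LC_adj {α : Type*} (G : FGraph α) (v a b : α) :
    (G.LC v).Adj a b ↔ a ≠ b ∧ Xor' (G.Adj a b) (G.Adj v a ∧ G.Adj v b) := Iff.rfl

private lemma ZM_adj {α : Type*} (G : FGraph α) (v a b : α) :
    (G.ZM v).Adj a b ↔ G.Adj a b ∧ a ≠ v ∧ b ≠ v := Iff.rfl

private lemma ZM_verts {α : Type*} (G : FGraph α) (v : α) :
    (G.ZM v).verts = G.verts \ {v} := rfl

private lemma LC_verts {α : Type*} (G : FGraph α) (v : α) :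
    (G.LC v).verts = G.verts := rfl

/-- tail vertex: beyond `m`, even or the last vertex `n-1`. -/
private def Tb (n m b : ℕ) : Prop :=
  m < b ∧ b < n ∧ (b % 2 = 0 ∨ b + 1 = n)

/-- invariant adjacency: path up to `m`, plus star from `m` onto the tail. -/
private def Q0 (n m a b : ℕ) : Prop :=
  (a + 1 = b ∧ b ≤ m) ∨ (b + 1 = a ∧ a ≤ m) ∨
  (a = m ∧ Tb n m b) ∨ (b = m ∧ Tb n m a)

private def Q1 (n u a b : ℕ) : Prop :=
  (a + 1 = b ∧ b ≤ u + 2) ∨ (b + 1 = a ∧ a ≤ u + 2) ∨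
  (a = u + 2 ∧ Tb n (u + 2) b) ∨ (b = u + 2 ∧ Tb n (u + 2) a) ∨
  (a = u + 1 ∧ Tb n (u + 2) b) ∨ (b = u + 1 ∧ Tb n (u + 2) a) ∨
  (Tb n (u + 2) a ∧ Tb n (u + 2) b ∧ a ≠ b)

private def Q2 (n u a b : ℕ) : Prop :=
  (a + 1 = b ∧ b ≤ u + 2) ∨ (b + 1 = a ∧ a ≤ u + 2) ∨
  (a = u + 1 ∧ Tb n (u + 2) b) ∨ (b = u + 1 ∧ Tb n (u + 2) a) ∨
  (a = u ∧ Tb n (u + 2) b) ∨ (b = u ∧ Tb n (u + 2) a) ∨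
  (a = u ∧ b = u + 2) ∨ (b = u ∧ a = u + 2)

private def Q3 (n u a b : ℕ) : Prop :=
  (a + 1 = b ∧ b ≤ u) ∨ (b + 1 = a ∧ a ≤ u) ∨
  (a = u ∧ (Tb n (u + 2) b ∨ b = u + 2)) ∨ (b = u ∧ (Tb n (u + 2) a ∨ a = u + 2))

set_option maxHeartbeats 8000000 in
private lemma N0 (n u : ℕ) (hn : u + 4 ≤ n) (hue : u % 2 = 0) (hne : n % 2 = 0) :
    ∀ x, Q0 n (u + 2) (u + 2) x ↔ (x = u + 1 ∨ Tb n (u + 2) x) := by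
  intro x
  simp only [Q0, Tb, true_and, and_true, le_refl, lt_irrefl, false_and, and_false, or_false,
    false_or, lt_self_iff_false]
  omega

set_option maxHeartbeats 8000000 in
private lemma N1 (n u : ℕ) (hn : u + 4 ≤ n) (hue : u % 2 = 0) (hne : n % 2 = 0) :
    ∀ x, Q1 n u (u + 1) x ↔ (x = u ∨ x = u + 2 ∨ Tb n (u + 2) x) := by
  intro x
  simp only [Q1, Tb, true_and, and_true, le_refl, lt_irrefl, false_and, and_false, or_false,
    false_or, lt_self_iff_false]
  omega

set_option maxHeartbeats 8000000 in
private lemma N3 (n u : ℕ) (hn : u + 4 ≤ n) (hue : u % 2 = 0) (hne : n % 2 = 0) :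
    ∀ x, Q3 n u (u + 2) x ↔ x = u := by
  intro x
  simp only [Q3, Tb, true_and, and_true, le_refl, lt_irrefl, false_and, and_false, or_false,
    false_or, lt_self_iff_false]
  omega

set_option maxHeartbeats 8000000 in
private lemma L1 (n u : ℕ) (hn : u + 4 ≤ n) (hue : u % 2 = 0) (hne : n % 2 = 0) (a b : ℕ) :
    (a ≠ b ∧ Xor' (Q0 n (u + 2) a b)
      ((a = u + 1 ∨ Tb n (u + 2) a) ∧ (b = u + 1 ∨ Tb n (u + 2) b))) ↔ Q1 n u a b := by
  simp only [Xor']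
  constructor
  · rintro ⟨hab, ⟨h, -⟩ | ⟨⟨ha, hb⟩, -⟩⟩
    · rcases h with h | h | h | h
      · exact Or.inl h
      · exact Or.inr (Or.inl h)
      · exact Or.inr (Or.inr (Or.inl h))
      · exact Or.inr (Or.inr (Or.inr (Or.inl h)))
    · rcases ha with rfl | hTa <;> rcases hb with rfl | hTb
      · exact absurd rfl hab
      · exact Or.inr (Or.inr (Or.inr (Or.inr (Or.inl ⟨rfl, hTb⟩))))
      · exact Or.inr (Or.inr (Or.inr (Or.inr (Or.inr (Or.inl ⟨rfl, hTa⟩)))))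
      · exact Or.inr (Or.inr (Or.inr (Or.inr (Or.inr (Or.inr ⟨hTa, hTb, hab⟩)))))
  · rintro (⟨h1, h2⟩ | ⟨h1, h2⟩ | ⟨h1, hx, hy, hz⟩ | ⟨h1, hx, hy, hz⟩ |
      ⟨h1, hx, hy, hz⟩ | ⟨h1, hx, hy, hz⟩ | ⟨⟨hx, hy, hz⟩, ⟨hx', hy', hz'⟩, hab⟩)
    · exact ⟨by omega, Or.inl ⟨Or.inl ⟨h1, h2⟩, by simp only [Tb]; omega⟩⟩
    · exact ⟨by omega, Or.inl ⟨Or.inr (Or.inl ⟨h1, h2⟩), by simp only [Tb]; omega⟩⟩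
    · exact ⟨by omega, Or.inl ⟨Or.inr (Or.inr (Or.inl ⟨h1, hx, hy, hz⟩)),
        by simp only [Tb]; omega⟩⟩
    · exact ⟨by omega, Or.inl ⟨Or.inr (Or.inr (Or.inr ⟨h1, hx, hy, hz⟩)),
        by simp only [Tb]; omega⟩⟩
    · exact ⟨by omega, Or.inr ⟨⟨Or.inl h1, Or.inr ⟨hx, hy, hz⟩⟩, by simp only [Q0, Tb]; omega⟩⟩
    · exact ⟨by omega, Or.inr ⟨⟨Or.inr ⟨hx, hy, hz⟩, Or.inl h1⟩, by simp only [Q0, Tb]; omega⟩⟩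
    · exact ⟨hab, Or.inr ⟨⟨Or.inr ⟨hx, hy, hz⟩, Or.inr ⟨hx', hy', hz'⟩⟩,
        by simp only [Q0, Tb]; omega⟩⟩

set_option maxHeartbeats 8000000 in
private lemma L2 (n u : ℕ) (hn : u + 4 ≤ n) (hue : u % 2 = 0) (hne : n % 2 = 0) (a b : ℕ) :
    (a ≠ b ∧ Xor' (Q1 n u a b)
      ((a = u ∨ a = u + 2 ∨ Tb n (u + 2) a) ∧ (b = u ∨ b = u + 2 ∨ Tb n (u + 2) b)))
      ↔ Q2 n u a b := by
  simp only [Xor']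
  constructor
  · rintro ⟨hab, ⟨h, hnB⟩ | ⟨⟨ha, hb⟩, hnA⟩⟩
    · rcases h with h | h | h | h | h | h | h
      · exact Or.inl h
      · exact Or.inr (Or.inl h)
      · exact absurd ⟨Or.inr (Or.inl h.1), Or.inr (Or.inr h.2)⟩ hnB
      · exact absurd ⟨Or.inr (Or.inr h.2), Or.inr (Or.inl h.1)⟩ hnB
      · exact Or.inr (Or.inr (Or.inl h))
      · exact Or.inr (Or.inr (Or.inr (Or.inl h)))
      · exact absurd ⟨Or.inr (Or.inr h.1), Or.inr (Or.inr h.2.1)⟩ hnB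
    · rcases ha with rfl | rfl | hTa <;> rcases hb with rfl | rfl | hTb
      · exact absurd rfl hab
      · exact Or.inr (Or.inr (Or.inr (Or.inr (Or.inr (Or.inr (Or.inl ⟨rfl, rfl⟩))))))
      · exact Or.inr (Or.inr (Or.inr (Or.inr (Or.inl ⟨rfl, hTb⟩))))
      · exact Or.inr (Or.inr (Or.inr (Or.inr (Or.inr (Or.inr (Or.inr ⟨rfl, rfl⟩))))))
      · exact absurd rfl hab
      · exact absurd (Or.inr (Or.inr (Or.inl ⟨rfl, hTb⟩))) hnA
      · exact Or.inr (Or.inr (Or.inr (Or.inr (Or.inr (Or.inl ⟨rfl, hTa⟩)))))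
      · exact absurd (Or.inr (Or.inr (Or.inr (Or.inl ⟨rfl, hTa⟩)))) hnA
      · exact absurd (Or.inr (Or.inr (Or.inr (Or.inr (Or.inr (Or.inr ⟨hTa, hTb, hab⟩))))))
          hnA
  · rintro (⟨h1, h2⟩ | ⟨h1, h2⟩ | ⟨h1, hx, hy, hz⟩ | ⟨h1, hx, hy, hz⟩ |
      ⟨h1, hx, hy, hz⟩ | ⟨h1, hx, hy, hz⟩ | ⟨h1, h2⟩ | ⟨h1, h2⟩)
    · exact ⟨by omega, Or.inl ⟨Or.inl ⟨h1, h2⟩, by simp only [Tb]; omega⟩⟩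
    · exact ⟨by omega, Or.inl ⟨Or.inr (Or.inl ⟨h1, h2⟩), by simp only [Tb]; omega⟩⟩
    · exact ⟨by omega, Or.inl ⟨Or.inr (Or.inr (Or.inr (Or.inr (Or.inl ⟨h1, hx, hy, hz⟩)))),
        by simp only [Tb]; omega⟩⟩
    · exact ⟨by omega,
        Or.inl ⟨Or.inr (Or.inr (Or.inr (Or.inr (Or.inr (Or.inl ⟨h1, hx, hy, hz⟩))))),
        by simp only [Tb]; omega⟩⟩
    · exact ⟨by omega, Or.inr ⟨⟨Or.inl h1, Or.inr (Or.inr ⟨hx, hy, hz⟩)⟩,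
        by simp only [Q1, Tb]; omega⟩⟩
    · exact ⟨by omega, Or.inr ⟨⟨Or.inr (Or.inr ⟨hx, hy, hz⟩), Or.inl h1⟩,
        by simp only [Q1, Tb]; omega⟩⟩
    · exact ⟨by omega, Or.inr ⟨⟨Or.inl h1, Or.inr (Or.inl h2)⟩, by simp only [Q1, Tb]; omega⟩⟩
    · exact ⟨by omega, Or.inr ⟨⟨Or.inr (Or.inl h2), Or.inl h1⟩, by simp only [Q1, Tb]; omega⟩⟩

set_option maxHeartbeats 8000000 in
private lemma L3 (n u : ℕ) (hn : u + 4 ≤ n) (hue : u % 2 = 0) (hne : n % 2 = 0) (a b : ℕ) :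
    (Q2 n u a b ∧ a ≠ u + 1 ∧ b ≠ u + 1) ↔ Q3 n u a b := by
  simp only [Q2, Q3, Tb, true_and, and_true, le_refl, lt_irrefl, false_and, and_false, or_false,
    false_or, lt_self_iff_false]
  omega

set_option maxHeartbeats 8000000 in
private lemma L4 (n u : ℕ) (hn : u + 4 ≤ n) (hue : u % 2 = 0) (hne : n % 2 = 0) (a b : ℕ) :
    (a ≠ b ∧ Xor' (Q3 n u a b) (a = u ∧ b = u)) ↔ Q0 n u a b := by
  simp only [Q0, Q3, Tb, Xor', Xor, ne_eq, true_and, and_true, le_refl, lt_irrefl, false_and,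
    and_false, or_false, false_or, lt_self_iff_false]
  omega

private lemma step_lem (n u : ℕ) (hn : u + 4 ≤ n) (hue : u % 2 = 0) (hne : n % 2 = 0)
    (G : FGraph ℕ) (hA : ∀ a b, G.Adj a b ↔ Q0 n (u + 2) a b) :
    ∀ a b, (G.XM (u + 1) (u + 2)).Adj a b ↔ Q0 n u a b := by
  have h1 : ∀ a b, (G.LC (u + 2)).Adj a b ↔ Q1 n u a b := by
    intro a b
    rw [LC_adj]
    simp only [hA, N0 n u hn hue hne]
    exact L1 n u hn hue hne a b
  have h2 : ∀ a b, ((G.LC (u + 2)).LC (u + 1)).Adj a b ↔ Q2 n u a b := by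
    intro a b
    rw [LC_adj]
    simp only [h1, N1 n u hn hue hne]
    exact L2 n u hn hue hne a b
  have h3 : ∀ a b, (((G.LC (u + 2)).LC (u + 1)).ZM (u + 1)).Adj a b ↔ Q3 n u a b := by
    intro a b
    rw [ZM_adj]
    simp only [h2]
    exact L3 n u hn hue hne a b
  intro a b
  show ((((G.LC (u + 2)).LC (u + 1)).ZM (u + 1)).LC (u + 2)).Adj a b ↔ _
  rw [LC_adj]
  simp only [h3, N3 n u hn hue hne]
  exact L4 n u hn hue hne a b

private lemma pathXMSeq_key (k : ℕ) (hk : 1 ≤ k) : ∀ t, t ≤ k - 1 →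
    (pathXMSeq k t).verts = {i | i < 2 * k ∧ (i ≤ 2 * (k - 1 - t) ∨ i % 2 = 0 ∨ i = 2 * k - 1)} ∧
    ∀ a b, (pathXMSeq k t).Adj a b ↔ Q0 (2 * k) (2 * (k - 1 - t)) a b := by
  intro t
  induction t with
  | zero =>
    intro _
    constructor
    · ext i
      simp only [pathXMSeq, pathGraph, Set.mem_setOf_eq]
      omega
    · intro a b
      simp only [pathXMSeq, pathGraph, Q0, Tb]
      omega
  | succ t ih =>
    intro ht
    obtain ⟨hV, hA⟩ := ih (by omega)
    obtain ⟨u, hu⟩ : ∃ u, k - 1 - t = u + 1 := ⟨k - 2 - t, by omega⟩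
    have hm : 2 * (k - 1 - t) = 2 * u + 2 := by omega
    have hm1 : 2 * (k - 1 - t) - 1 = 2 * u + 1 := by omega
    have hm' : 2 * (k - 1 - (t + 1)) = 2 * u := by omega
    constructor
    · show ((((pathXMSeq k t).LC _).LC _).ZM _).verts = _
      simp only [LC_verts, ZM_verts, hV, hm1]
      ext i
      simp only [Set.mem_diff, Set.mem_setOf_eq, Set.mem_singleton_iff]
      omega
    · have hst := step_lem (2 * k) (2 * u) (by omega) (by omega) (by omega) (pathXMSeq k t)
        (fun a b => by rw [hA, hm])
      intro a b
      show ((pathXMSeq k t).XM (2 * (k - 1 - t) - 1) (2 * (k - 1 - t))).Adj a b ↔ _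
      rw [hm1, hm, hm']
      exact hst a b

theorem pathXMSeq_star (k : ℕ) (hk : 1 ≤ k) :
    (pathXMSeq k (k - 1)).verts = {i | i < 2 * k ∧ (Even i ∨ i = 2 * k - 1)} ∧
    ∀ a b, (pathXMSeq k (k - 1)).Adj a b ↔
      (a ∈ {i | i < 2 * k ∧ (Even i ∨ i = 2 * k - 1)} ∧
       b ∈ {i | i < 2 * k ∧ (Even i ∨ i = 2 * k - 1)} ∧
       a ≠ b ∧ (a = 0 ∨ b = 0)) := by
  obtain ⟨hV, hA⟩ := pathXMSeq_key k hk (k - 1) le_rfl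
  constructor
  · rw [hV]
    ext i
    simp only [Set.mem_setOf_eq, Nat.even_iff]
    omega
  · intro a b
    rw [hA]
    simp only [Q0, Tb, Set.mem_setOf_eq, Nat.even_iff, ne_eq]
    omega
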